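/- Let (X,d) be a metric space with d≤1, ε>0, and F a family of continuous selfmaps with each F^n pointwise equicontinuous. Define ρ(x,y)=d(x,y)+Σ_{k=1}^∞ sup{d(f(x),f(y)):f∈F^k}/(1+ε)^k. Then for every n∈ℕ and every g∈F^n, ρ(g(x),g(y)) ≤ (1+ε)^n·ρ(x,y) for all x,y∈X. -/

import Mathlib

open Metric Filter Topology

variable {X : Type*}

/-- A family `F` of selfmaps is uniformly equicontinuous. -/
def UnifEquicont [MetricSpace X] (F : Set (X → X)) : Prop :=
  ∀ ε : ℝ, 0 < ε → ∃ δ : ℝ, 0 < δ ∧ ∀ x y : X, dist x y < δ → ∀ f ∈ F, dist (f x) (f y) < ε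

/-- A family `F` of selfmaps is pointwise equicontinuous. -/
def PtEquicont [MetricSpace X] (F : Set (X → X)) : Prop :=
  ∀ x : X, ∀ ε : ℝ, 0 < ε →
    ∃ δ : ℝ, 0 < δ ∧ ∀ y : X, dist x y < δ → ∀ f ∈ F, dist (f x) (f y) < ε

/-- `famPow F n` is the family `F^n` of `n`-fold compositions of members of `F`. -/
def famPow (F : Set (X → X)) : ℕ → Set (X → X)
  | 0 => {id}
  | n + 1 => {h | ∃ f ∈ F, ∃ g ∈ famPow F n, h = f ∘ g}

/-- The metric `ρ(x,y) = d(x,y) + Σₙ sup{d(f x, f y) : f ∈ F^n}/(1+ε)^n`. -/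
noncomputable def rho [MetricSpace X] (F : Set (X → X)) (ε : ℝ) (x y : X) : ℝ :=
  dist x y + ∑' n : ℕ, (⨆ f ∈ famPow F (n + 1), dist (f x) (f y)) / (1 + ε) ^ (n + 1)

/-- `ρ` is a metric on `X`. -/
def IsMetric (ρ : X → X → ℝ) : Prop :=
  (∀ x, ρ x x = 0) ∧ (∀ x y, ρ x y = 0 → x = y) ∧ (∀ x y, ρ x y = ρ y x) ∧
    (∀ x y z, ρ x z ≤ ρ x y + ρ y z)

lemma famPow_comp (F : Set (X → X)) :
    ∀ k n : ℕ, ∀ f g : X → X, f ∈ famPow F k → g ∈ famPow F n →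
      f ∘ g ∈ famPow F (k + n) := by
  intro k
  induction k with
  | zero =>
    intro n f g hf hg
    simp only [famPow, Set.mem_singleton_iff] at hf
    subst hf
    simpa using hg
  | succ k ih =>
    intro n f g hf hg
    obtain ⟨f₁, hf₁, g₁, hg₁, rfl⟩ := hf
    rw [show k + 1 + n = (k + n) + 1 by omega]
    exact ⟨f₁, hf₁, g₁ ∘ g, ih n g₁ g hg₁ hg, rfl⟩

theorem rho_pow_lipschitz [MetricSpace X] (F : Set (X → X)) (ε : ℝ)
    (hd : ∀ x y : X, dist x y ≤ 1) (hFc : ∀ f ∈ F, Continuous f)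
    (hF : ∀ n : ℕ, 0 < n → PtEquicont (famPow F n)) (hε : 0 < ε) :
    ∀ n : ℕ, 0 < n → ∀ g ∈ famPow F n, ∀ x y : X,
      rho F ε (g x) (g y) ≤ (1 + ε) ^ n * rho F ε x y := by
  intro n hn g hg x y
  set A : ℝ := 1 + ε with hA
  have hA1 : 1 < A := by simp [hA]; linarith
  have hA0 : 0 < A := by linarith
  set S : ℕ → X → X → ℝ := fun k a b => ⨆ f ∈ famPow F k, dist (f a) (f b) with hSdef
  have hrho : ∀ a b : X, rho F ε a b = dist a b + ∑' k : ℕ, S (k + 1) a b / A ^ (k + 1) :=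
    fun a b => rfl
  have hS0 : ∀ k (a b : X), 0 ≤ S k a b := fun k a b =>
    Real.iSup_nonneg fun f => Real.iSup_nonneg fun _ => dist_nonneg
  have hS1 : ∀ k (a b : X), S k a b ≤ 1 := fun k a b =>
    Real.iSup_le (fun f => Real.iSup_le (fun _ => hd _ _) zero_le_one) zero_le_one
  have hle : ∀ k (a b : X) (h : X → X), h ∈ famPow F k → dist (h a) (h b) ≤ S k a b := by
    intro k a b h hh
    have hbdd : BddAbove (Set.range fun f : X → X => ⨆ _ : f ∈ famPow F k, dist (f a) (f b)) := by
      refine ⟨1, ?_⟩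
      rintro _ ⟨f, rfl⟩
      exact Real.iSup_le (fun _ => hd _ _) zero_le_one
    calc dist (h a) (h b) = ⨆ _ : h ∈ famPow F k, dist (h a) (h b) :=
        (ciSup_pos (f := fun _ : h ∈ famPow F k => dist (h a) (h b)) hh).symm
      _ ≤ S k a b := le_ciSup hbdd h
  have hcomp : ∀ k : ℕ, S k (g x) (g y) ≤ S (k + n) x y := by
    intro k
    refine Real.iSup_le (fun f => Real.iSup_le (fun hf => ?_) (hS0 _ _ _)) (hS0 _ _ _)
    exact hle (k + n) x y (f ∘ g) (famPow_comp F k n f g hf hg)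
  -- summability
  have hAk : ∀ k : ℕ, (0:ℝ) < A ^ k := fun k => pow_pos hA0 k
  have hgeo : Summable (fun k : ℕ => (1 / A) ^ (k + 1)) := by
    have h1 : (0:ℝ) ≤ 1 / A := by positivity
    have h2 : 1 / A < 1 := by
      rw [div_lt_one hA0]; exact hA1
    exact (summable_geometric_of_lt_one h1 h2).comp_injective (add_left_injective 1)
  have hsum : ∀ u : ℕ → ℝ, (∀ k, 0 ≤ u k) → (∀ k, u k ≤ 1) →
      Summable (fun k => u k / A ^ (k + 1)) := by
    intro u h0 h1
    refine Summable.of_nonneg_of_le (fun k => div_nonneg (h0 k) (hAk _).le) (fun k => ?_) hgeo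
    rw [div_pow, one_pow]
    gcongr
    exact h1 k
  have hsum1 : Summable (fun k : ℕ => S (k + 1) (g x) (g y) / A ^ (k + 1)) :=
    hsum _ (fun k => hS0 _ _ _) (fun k => hS1 _ _ _)
  have hsum2 : Summable (fun k : ℕ => S (k + n + 1) x y / A ^ (k + 1)) :=
    hsum _ (fun k => hS0 _ _ _) (fun k => hS1 _ _ _)
  have hsum3 : Summable (fun k : ℕ => S (k + 1) x y / A ^ (k + 1)) :=
    hsum _ (fun k => hS0 _ _ _) (fun k => hS1 _ _ _)
  set f : ℕ → ℝ := fun k => A ^ n * (S (k + 1) x y / A ^ (k + 1)) with hf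
  have hsumf : Summable f := hsum3.mul_left _
  have hfshift : ∀ k : ℕ, f (k + n) = S (k + n + 1) x y / A ^ (k + 1) := by
    intro k
    have hpow : A ^ (k + n + 1) = A ^ (k + 1) * A ^ n := by
      rw [← pow_add]; ring_nf
    simp only [hf, hpow]
    field_simp
  -- main chain
  have step1 : rho F ε (g x) (g y) ≤ S n x y + ∑' k : ℕ, S (k + n + 1) x y / A ^ (k + 1) := by
    rw [hrho]
    refine add_le_add (hle n x y g hg) (Summable.tsum_le_tsum (fun k => ?_) hsum1 hsum2)
    have h := hcomp (k + 1)
    rw [show k + 1 + n = k + n + 1 by omega] at h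
    gcongr
  have step2 : S n x y + ∑' k : ℕ, S (k + n + 1) x y / A ^ (k + 1) ≤ A ^ n * rho F ε x y := by
    rw [hrho, mul_add, ← tsum_mul_left]
    have hsplit : ∑' k : ℕ, f k = ∑ i ∈ Finset.range n, f i + ∑' k : ℕ, f (k + n) :=
      (Summable.sum_add_tsum_nat_add n hsumf).symm
    have htail : ∑' k : ℕ, f (k + n) = ∑' k : ℕ, S (k + n + 1) x y / A ^ (k + 1) := by
      exact tsum_congr hfshift
    have hsingle : S n x y ≤ ∑ i ∈ Finset.range n, f i := by
      have hmem : n - 1 ∈ Finset.range n := Finset.mem_range.2 (by omega)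
      have hval : f (n - 1) = S n x y := by
        have h1 : n - 1 + 1 = n := by omega
        simp only [hf, h1]
        rw [mul_div_assoc']
        rw [mul_comm, mul_div_assoc, div_self (hAk n).ne', mul_one]
      calc S n x y = f (n - 1) := hval.symm
        _ ≤ ∑ i ∈ Finset.range n, f i :=
          Finset.single_le_sum (f := f) (fun i _ => mul_nonneg (hAk n).le
            (div_nonneg (hS0 _ _ _) (hAk _).le)) hmem
    calc S n x y + ∑' k : ℕ, S (k + n + 1) x y / A ^ (k + 1)
        ≤ (∑ i ∈ Finset.range n, f i) + ∑' k : ℕ, f (k + n) := by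
          rw [htail]; exact add_le_add hsingle le_rfl
      _ ≤ A ^ n * dist x y + ((∑ i ∈ Finset.range n, f i) + ∑' k : ℕ, f (k + n)) := by
          have : 0 ≤ A ^ n * dist x y := mul_nonneg (hAk n).le dist_nonneg
          linarith
      _ = A ^ n * dist x y + ∑' k : ℕ, f k := by rw [← hsplit]
  exact step1.trans step2
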